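/- For a profile φ of length n ≥ 2k log k, any PML distribution p_φ constrained to have all nonzero probabilities at least 1/k satisfies S(p_φ) = Distinct(φ), provided the empirical distribution of some sequence generating φ also has its nonzero probabilities at least 1/k (so that P(p_φ, φ) > 0). -/

import Mathlib

open Finset
open scoped BigOperators Classical

namespace PML

noncomputable section

variable {D : Type*} [Fintype D] [DecidableEq D]

/-- `p` is a probability distribution on the finite domain `D`. -/
def IsDist (p : D → ℝ) : Prop := (∀ x, 0 ≤ p x) ∧ ∑ x, p x = 1

/-- Probability of observing the sequence `y` of `n` i.i.d. samples from `p`. -/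
def seqProb (n : ℕ) (p : D → ℝ) (y : Fin n → D) : ℝ := ∏ i, p (y i)

/-- Probability of an event over sequences of `n` i.i.d. samples from `p`. -/
def prEvent (n : ℕ) (p : D → ℝ) (P : (Fin n → D) → Prop) : ℝ :=
  ∑ y : Fin n → D, if P y then seqProb n p y else 0

/-- Frequency (multiplicity) of symbol `x` in the sequence `y`. -/
def freq (n : ℕ) (y : Fin n → D) (x : D) : ℕ :=
  (Finset.univ.filter (fun i => y i = x)).card

/-- The `S`-pseudo profile of the sequence `y`: the number of elements of `S`
with frequency `j`. -/
def profS (n : ℕ) (S : Finset D) (y : Fin n → D) : ℕ → ℕ :=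
  fun j => (S.filter (fun x => freq n y x = j)).card

/-- Probability under `p` of observing the `S`-pseudo profile `φ` (on positive
frequencies). -/
def profProb (n : ℕ) (p : D → ℝ) (S : Finset D) (φ : ℕ → ℕ) : ℝ :=
  ∑ y : Fin n → D, if (∀ j, 1 ≤ j → profS n S y j = φ j) then seqProb n p y else 0

/-- The set of distinct (positive) frequencies appearing in a profile `φ`. -/
def Freqs (φ : ℕ → ℕ) : Set ℕ := {j | 1 ≤ j ∧ φ j ≠ 0}

def Distinct (n : ℕ) (φ : ℕ → ℕ) : ℕ := ∑ j ∈ Finset.Icc 1 n, φ j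

def suppF (p : D → ℝ) : Finset D := Finset.univ.filter (fun x => p x ≠ 0)

/-- The support constraint: `p` is a distribution with every nonzero
probability at least `1/k`. -/
def Constr (k : ℕ) (p : D → ℝ) : Prop :=
  IsDist p ∧ ∀ x, p x ≠ 0 → 1 / (k : ℝ) ≤ p x

lemma seqProb_nonneg {n : ℕ} {p : D → ℝ} (hp : ∀ x, 0 ≤ p x) (z : Fin n → D) :
    0 ≤ seqProb n p z := Finset.prod_nonneg fun i _ => hp (z i)

lemma freq_le {n : ℕ} (z : Fin n → D) (x : D) : freq n z x ≤ n := by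
  classical
  calc (Finset.univ.filter (fun i => z i = x)).card
      ≤ (Finset.univ : Finset (Fin n)).card := Finset.card_filter_le _ _
    _ = n := by simp

lemma sum_freq {n : ℕ} (z : Fin n → D) : ∑ x, freq n z x = n := by
  classical
  have := Finset.card_eq_sum_card_fiberwise
    (s := (Finset.univ : Finset (Fin n))) (t := (Finset.univ : Finset D))
    (f := z) (fun i _ => Finset.mem_univ _)
  simpa [freq] using this.symm

lemma mem_symbols {n : ℕ} {z : Fin n → D} {x : D} :
    freq n z x ≠ 0 ↔ ∃ i, z i = x := by
  rw [freq, Ne, Finset.card_eq_zero, ← Ne, ← Finset.nonempty_iff_ne_empty,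
    Finset.filter_nonempty_iff]
  simp

lemma distinct_card {n : ℕ} {φ : ℕ → ℕ} {z : Fin n → D}
    (hz : ∀ j, 1 ≤ j → profS n Finset.univ z j = φ j) :
    (Finset.univ.filter (fun x => freq n z x ≠ 0)).card = Distinct n φ := by
  classical
  have h := Finset.card_eq_sum_card_fiberwise
    (s := Finset.univ.filter (fun x : D => freq n z x ≠ 0))
    (t := Finset.Icc 1 n) (f := fun x => freq n z x)
    (by
      intro x hx
      simp only [Finset.mem_coe, Finset.mem_filter] at hx
      exact Finset.mem_Icc.2 ⟨Nat.one_le_iff_ne_zero.2 hx.2, freq_le z x⟩)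
  rw [h]
  unfold Distinct
  apply Finset.sum_congr rfl
  intro j hj
  have hj1 : 1 ≤ j := (Finset.mem_Icc.1 hj).1
  rw [← hz j hj1]
  unfold profS
  congr 1
  ext x
  simp only [Finset.mem_filter, Finset.mem_univ, true_and]
  constructor
  · rintro ⟨_, h2⟩; exact h2
  · intro h2; exact ⟨by omega, h2⟩

/-- For a profile `φ` of length `n ≥ 2k log k`, any PML distribution `p_φ`
constrained to have nonzero probabilities at least `1/k` satisfies
`S(p_φ) = Distinct(φ)`, provided the empirical distribution of some sequence
generating `φ` also satisfies the constraint. -/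
theorem pml_support_eq_distinct (k n : ℕ) (hk : 2 ≤ k)
    (hn : 2 * (k : ℝ) * Real.log k ≤ n)
    (φ : ℕ → ℕ) (pφ : D → ℝ) (hc : Constr k pφ)
    (hmax : ∀ q : D → ℝ, Constr k q →
      profProb n q Finset.univ φ ≤ profProb n pφ Finset.univ φ)
    (y : Fin n → D) (hy : ∀ j, 1 ≤ j → profS n Finset.univ y j = φ j)
    (hemp : ∀ x, freq n y x ≠ 0 → 1 / (k : ℝ) ≤ (freq n y x : ℝ) / n) :
    (suppF pφ).card = Distinct n φ := by
  classical
  have hkR : (2:ℝ) ≤ (k:ℝ) := by exact_mod_cast hk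
  have hk0 : (0:ℝ) < (k:ℝ) := by linarith
  have hlogk : 0 < Real.log k := Real.log_pos (by linarith)
  have hnR : (0:ℝ) < (n:ℝ) := lt_of_lt_of_le (by positivity) hn
  have hn0 : 0 < n := by exact_mod_cast hnR
  -- the empirical distribution
  set q : D → ℝ := fun x => (freq n y x : ℝ) / n with hqdef
  have hsumfreq : (∑ x, ((freq n y x : ℝ))) = (n : ℝ) := by
    exact_mod_cast congrArg (Nat.cast : ℕ → ℝ) (sum_freq y)
  have hq : Constr k q := by
    refine ⟨⟨fun x => by positivity, ?_⟩, ?_⟩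
    · rw [hqdef, ← Finset.sum_div, hsumfreq, div_self (ne_of_gt hnR)]
    · intro x hx
      apply hemp
      intro h0
      apply hx
      simp [hqdef, h0]
  have hqpos : 0 < profProb n q Finset.univ φ := by
    have hterm : 0 < seqProb n q y := by
      apply Finset.prod_pos
      intro i _
      have h1 : freq n y (y i) ≠ 0 := mem_symbols.2 ⟨i, rfl⟩
      have h2 : 0 < (freq n y (y i) : ℝ) := by
        exact_mod_cast Nat.pos_of_ne_zero h1
      exact div_pos h2 hnR
    have := Finset.single_le_sum
      (f := fun z : Fin n → D =>
        if (∀ j, 1 ≤ j → profS n Finset.univ z j = φ j) then seqProb n q z else 0)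
      (fun z _ => by
        split_ifs
        · exact seqProb_nonneg hq.1.1 z
        · exact le_refl 0)
      (Finset.mem_univ y)
    rw [if_pos hy] at this
    exact lt_of_lt_of_le hterm this
  have hPpos : 0 < profProb n pφ Finset.univ φ := lt_of_lt_of_le hqpos (hmax q hq)
  set S : Finset D := suppF pφ with hSdef
  set d : ℕ := Distinct n φ with hddef
  -- d ≥ 1
  have hd1 : 1 ≤ d := by
    rw [hddef, ← distinct_card hy]
    have : y ⟨0, hn0⟩ ∈ Finset.univ.filter (fun x => freq n y x ≠ 0) :=
      Finset.mem_filter.2 ⟨Finset.mem_univ _, mem_symbols.2 ⟨⟨0, hn0⟩, rfl⟩⟩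
    exact Finset.card_pos.2 ⟨_, this⟩
  -- S.card ≤ k
  have hSk : S.card ≤ k := by
    have hmem : ∀ x ∈ S, 1/(k:ℝ) ≤ pφ x := fun x hx =>
      hc.2 x (by simpa [hSdef, suppF] using hx)
    have h1 : (S.card : ℝ) * (1/k) ≤ ∑ x ∈ S, pφ x := by
      simpa [nsmul_eq_mul] using Finset.card_nsmul_le_sum S pφ (1/(k:ℝ)) hmem
    have h2 : ∑ x ∈ S, pφ x ≤ 1 := by
      rw [← hc.1.2]
      exact Finset.sum_le_sum_of_subset_of_nonneg (Finset.subset_univ _)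
        (fun x _ _ => hc.1.1 x)
    have h3 : (S.card : ℝ) ≤ k := by
      rw [mul_one_div] at h1
      rw [div_le_iff₀ hk0] at h1
      nlinarith
    exact_mod_cast h3
  rcases lt_trichotomy S.card d with hlt | heq | hgt
  · -- impossible: profProb pφ = 0
    exfalso
    have hzero : profProb n pφ Finset.univ φ = 0 := by
      unfold profProb
      apply Finset.sum_eq_zero
      intro z _
      split_ifs with hcond
      · by_cases hex : ∃ i, pφ (z i) = 0
        · obtain ⟨i, hi⟩ := hex
          exact Finset.prod_eq_zero (Finset.mem_univ i) hi
        · exfalso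
          push_neg at hex
          have hsub : Finset.univ.filter (fun x => freq n z x ≠ 0) ⊆ S := by
            intro x hx
            simp only [Finset.mem_filter] at hx
            obtain ⟨i, hi⟩ := mem_symbols.1 hx.2
            have : pφ x ≠ 0 := hi ▸ hex i
            simp [hSdef, suppF, this]
          have := Finset.card_le_card hsub
          rw [distinct_card hcond] at this
          omega
      · rfl
    linarith
  · exact heq
  · -- the hard case
    exfalso
    set m : ℕ := S.card - d with hmdef
    have hm1 : 1 ≤ m := by omega
    have hmk : m ≤ k := by omega
    have hmkR : (m:ℝ)/(k:ℝ) ≤ 1 := by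
      rw [div_le_one hk0]; exact_mod_cast hmk
    have hB0 : (0:ℝ) ≤ 1 - (m:ℝ)/k := by linarith
    have hsumS : ∑ x ∈ S, pφ x = 1 := by
      rw [← hc.1.2]
      apply Finset.sum_subset (Finset.subset_univ _)
      intro x _ hx
      by_contra h
      exact hx (by simp [hSdef, suppF, h])
    -- key bound for each T
    have key : ∀ T ∈ Finset.powersetCard d S,
        (∑ z : Fin n → D,
          if ((∀ j, 1 ≤ j → profS n Finset.univ z j = φ j) ∧
              Finset.univ.filter (fun x => freq n z x ≠ 0) = T)
          then seqProb n pφ z else 0)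
        ≤ (1 - (m:ℝ)/k)^n * profProb n pφ Finset.univ φ := by
      intro T hT
      rw [Finset.mem_powersetCard] at hT
      obtain ⟨hTS, hTcard⟩ := hT
      set t : ℝ := ∑ x ∈ T, pφ x with htdef
      have hTlow : ∀ x ∈ T, 1/(k:ℝ) ≤ pφ x := fun x hx =>
        hc.2 x (by simpa [hSdef, suppF] using hTS hx)
      have ht_pos : 0 < t := by
        have : (T.card:ℝ) * (1/k) ≤ t := by
          simpa [nsmul_eq_mul] using Finset.card_nsmul_le_sum T pφ (1/(k:ℝ)) hTlow
        rw [hTcard] at this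
        have hd1R : (1:ℝ) ≤ d := by exact_mod_cast hd1
        nlinarith [one_div_pos.2 hk0]
      have hc_lb : (m:ℝ) * (1/k) ≤ ∑ x ∈ S \ T, pφ x := by
        have hcard : (S \ T).card = m := by
          rw [Finset.card_sdiff_of_subset hTS, hTcard]
        have h : ∀ x ∈ S \ T, 1/(k:ℝ) ≤ pφ x := fun x hx =>
          hc.2 x (by simpa [hSdef, suppF] using (Finset.mem_sdiff.1 hx).1)
        have := Finset.card_nsmul_le_sum (S \ T) pφ (1/(k:ℝ)) h
        rw [hcard] at this
        simpa [nsmul_eq_mul] using this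
      have hsplit : t + ∑ x ∈ S \ T, pφ x = 1 := by
        rw [htdef, ← hsumS]
        rw [add_comm]
        exact Finset.sum_sdiff hTS
      have ht_le : t ≤ 1 - (m:ℝ)/k := by
        rw [mul_one_div] at hc_lb
        linarith
      have ht1 : t ≤ 1 := by
        have : (0:ℝ) ≤ (m:ℝ)/k := by positivity
        linarith
      -- scaled distribution
      set pT : D → ℝ := fun x => if x ∈ T then pφ x / t else 0 with hpTdef
      have hpT : Constr k pT := by
        refine ⟨⟨fun x => ?_, ?_⟩, ?_⟩
        · rw [hpTdef]
          dsimp only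
          split_ifs
          · exact div_nonneg (hc.1.1 x) (le_of_lt ht_pos)
          · exact le_refl 0
        · rw [hpTdef]
          rw [Finset.sum_ite_mem, Finset.univ_inter, ← Finset.sum_div, ← htdef,
            div_self (ne_of_gt ht_pos)]
        · intro x hx
          rw [hpTdef] at hx ⊢
          dsimp only at hx ⊢
          by_cases hxT : x ∈ T
          · rw [if_pos hxT]
            have h1 : 1/(k:ℝ) ≤ pφ x := hTlow x hxT
            calc 1/(k:ℝ) ≤ pφ x := h1
              _ ≤ pφ x / t := by
                rw [le_div_iff₀ ht_pos]
                nlinarith [hc.1.1 x]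
          · rw [if_neg hxT] at hx
            exact absurd rfl hx
      -- for z with symbol set T, seqProb factorizes
      have hfac : ∀ z : Fin n → D,
          Finset.univ.filter (fun x => freq n z x ≠ 0) = T →
          seqProb n pφ z = t^n * seqProb n pT z := by
        intro z hzT
        have hz_mem : ∀ i, z i ∈ T := by
          intro i
          rw [← hzT]
          exact Finset.mem_filter.2 ⟨Finset.mem_univ _, mem_symbols.2 ⟨i, rfl⟩⟩
        have h1 : seqProb n pT z = seqProb n pφ z / t^n := by
          unfold seqProb
          calc ∏ i, pT (z i) = ∏ i, pφ (z i) / t :=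
              Finset.prod_congr rfl (fun i _ => by
                rw [hpTdef]; exact if_pos (hz_mem i))
            _ = (∏ i, pφ (z i)) / ∏ _i : Fin n, t := Finset.prod_div_distrib _ _
            _ = (∏ i, pφ (z i)) / t^n := by
              rw [Finset.prod_const, Finset.card_univ, Fintype.card_fin]
        rw [h1]
        field_simp
      calc (∑ z : Fin n → D,
            if ((∀ j, 1 ≤ j → profS n Finset.univ z j = φ j) ∧
                Finset.univ.filter (fun x => freq n z x ≠ 0) = T)
            then seqProb n pφ z else 0)
          = ∑ z : Fin n → D, t^n *
              (if ((∀ j, 1 ≤ j → profS n Finset.univ z j = φ j) ∧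
                  Finset.univ.filter (fun x => freq n z x ≠ 0) = T)
              then seqProb n pT z else 0) := by
            apply Finset.sum_congr rfl
            intro z _
            split_ifs with h
            · rw [hfac z h.2]
            · ring
        _ = t^n * ∑ z : Fin n → D,
              (if ((∀ j, 1 ≤ j → profS n Finset.univ z j = φ j) ∧
                  Finset.univ.filter (fun x => freq n z x ≠ 0) = T)
              then seqProb n pT z else 0) := by
            rw [← Finset.mul_sum]
        _ ≤ t^n * profProb n pT Finset.univ φ := by
            apply mul_le_mul_of_nonneg_left ?_ (pow_nonneg (le_of_lt ht_pos) n)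
            unfold profProb
            apply Finset.sum_le_sum
            intro z _
            split_ifs with h1 h2
            · exact le_refl _
            · exact absurd h1.1 h2
            · exact seqProb_nonneg hpT.1.1 z
            · exact le_refl _
        _ ≤ t^n * profProb n pφ Finset.univ φ :=
            mul_le_mul_of_nonneg_left (hmax pT hpT) (pow_nonneg (le_of_lt ht_pos) n)
        _ ≤ (1 - (m:ℝ)/k)^n * profProb n pφ Finset.univ φ := by
            apply mul_le_mul_of_nonneg_right _ (le_of_lt hPpos)
            exact pow_le_pow_left₀ (le_of_lt ht_pos) ht_le n
    -- decomposition
    have hdecomp : profProb n pφ Finset.univ φ ≤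
        ∑ T ∈ Finset.powersetCard d S,
          (∑ z : Fin n → D,
            if ((∀ j, 1 ≤ j → profS n Finset.univ z j = φ j) ∧
                Finset.univ.filter (fun x => freq n z x ≠ 0) = T)
            then seqProb n pφ z else 0) := by
      unfold profProb
      rw [Finset.sum_comm]
      apply Finset.sum_le_sum
      intro z _
      by_cases hcond : ∀ j, 1 ≤ j → profS n Finset.univ z j = φ j
      · rw [if_pos hcond]
        by_cases hsub : Finset.univ.filter (fun x => freq n z x ≠ 0) ⊆ S
        · have hmem : Finset.univ.filter (fun x => freq n z x ≠ 0) ∈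
              Finset.powersetCard d S :=
            Finset.mem_powersetCard.2 ⟨hsub, distinct_card hcond⟩
          have hle := Finset.single_le_sum
            (f := fun T => if ((∀ j, 1 ≤ j → profS n Finset.univ z j = φ j) ∧
                Finset.univ.filter (fun x => freq n z x ≠ 0) = T)
              then seqProb n pφ z else 0)
            (fun T _ => by
              split_ifs
              · exact seqProb_nonneg hc.1.1 z
              · exact le_refl 0) hmem
          rw [if_pos ⟨hcond, rfl⟩] at hle
          exact hle
        · have hzero : seqProb n pφ z = 0 := by
            rw [Finset.not_subset] at hsub
            obtain ⟨x, hx1, hx2⟩ := hsub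
            simp only [Finset.mem_filter, Finset.mem_univ, true_and] at hx1
            obtain ⟨i, hi⟩ := mem_symbols.1 hx1
            have hpx : pφ x = 0 := by
              by_contra h
              exact hx2 (by simp [hSdef, suppF, h])
            exact Finset.prod_eq_zero (Finset.mem_univ i) (by rw [hi]; exact hpx)
          rw [hzero]
          apply Finset.sum_nonneg
          intro T _
          split_ifs
          · exact le_refl 0
          · exact le_refl 0
      · rw [if_neg hcond]
        apply Finset.sum_nonneg
        intro T _
        split_ifs with h
        · exact absurd h.1 hcond
        · exact le_refl 0
    -- combine
    have hsum : profProb n pφ Finset.univ φ ≤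
        ((S.card.choose d : ℝ) * (1 - (m:ℝ)/k)^n) * profProb n pφ Finset.univ φ := by
      refine hdecomp.trans ?_
      calc (∑ T ∈ Finset.powersetCard d S,
            (∑ z : Fin n → D,
              if ((∀ j, 1 ≤ j → profS n Finset.univ z j = φ j) ∧
                  Finset.univ.filter (fun x => freq n z x ≠ 0) = T)
              then seqProb n pφ z else 0))
          ≤ ∑ _T ∈ Finset.powersetCard d S,
              (1 - (m:ℝ)/k)^n * profProb n pφ Finset.univ φ :=
            Finset.sum_le_sum key
        _ = ((Finset.powersetCard d S).card : ℝ) *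
              ((1 - (m:ℝ)/k)^n * profProb n pφ Finset.univ φ) := by
            rw [Finset.sum_const, nsmul_eq_mul]
        _ = ((S.card.choose d : ℝ) * (1 - (m:ℝ)/k)^n) * profProb n pφ Finset.univ φ := by
            rw [Finset.card_powersetCard, mul_assoc]
    have hone : (1:ℝ) ≤ (S.card.choose d : ℝ) * (1 - (m:ℝ)/k)^n := by
      have h2 : 1 * profProb n pφ Finset.univ φ ≤
          ((S.card.choose d : ℝ) * (1 - (m:ℝ)/k)^n) * profProb n pφ Finset.univ φ := by
        rw [one_mul]; exact hsum
      exact le_of_mul_le_mul_right h2 hPpos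
    -- numeric bounds
    have hchoose : (S.card.choose d : ℝ) ≤ (k:ℝ)^m := by
      have e1 : S.card.choose d = S.card.choose m := by
        rw [hmdef, Nat.choose_symm (le_of_lt hgt)]
      have e2 : S.card.choose m ≤ S.card ^ m := Nat.choose_le_pow S.card m
      have e3 : (S.card:ℝ) ^ m ≤ (k:ℝ) ^ m :=
        pow_le_pow_left₀ (by positivity) (by exact_mod_cast hSk) m
      calc (S.card.choose d : ℝ) = (S.card.choose m : ℝ) := by rw [e1]
        _ ≤ (S.card:ℝ)^m := by exact_mod_cast e2
        _ ≤ (k:ℝ)^m := e3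
    have hm0 : (0:ℝ) ≤ (m:ℝ) := by positivity
    have hexp : (1 - (m:ℝ)/k)^n ≤ Real.exp (-((m:ℝ)/k)) ^ n := by
      apply pow_le_pow_left₀ hB0
      have := Real.add_one_le_exp (-((m:ℝ)/k))
      linarith
    have hexp2 : Real.exp (-((m:ℝ)/k)) ^ n = Real.exp ((n:ℝ) * (-((m:ℝ)/k))) :=
      (Real.exp_nat_mul _ n).symm
    have hexp3 : Real.exp ((n:ℝ) * (-((m:ℝ)/k))) ≤
        Real.exp (-(2 * (m:ℝ) * Real.log k)) := by
      apply Real.exp_le_exp.2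
      have h4 := mul_le_mul_of_nonneg_right hn (div_nonneg hm0 (le_of_lt hk0))
      have h5 : 2*(k:ℝ)*Real.log k * ((m:ℝ)/k) = 2*(m:ℝ)*Real.log k := by
        field_simp
      rw [h5] at h4
      rw [mul_neg, neg_le_neg_iff]
      calc 2*(m:ℝ)*Real.log k ≤ (n:ℝ) * ((m:ℝ)/k) := h4
        _ = (n:ℝ) * ((m:ℝ)/k) := rfl
    have hexp4 : Real.exp (-(2 * (m:ℝ) * Real.log k)) = ((k:ℝ)⁻¹)^(2*m) := by
      have e : -(2*(m:ℝ)*Real.log k) = ((2*m : ℕ):ℝ) * (-Real.log k) := by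
        push_cast; ring
      rw [e, Real.exp_nat_mul, Real.exp_neg, Real.exp_log hk0]
    have hone2 : (1:ℝ) ≤ (k:ℝ)^m * ((k:ℝ)⁻¹)^(2*m) := by
      calc (1:ℝ) ≤ (S.card.choose d : ℝ) * (1 - (m:ℝ)/k)^n := hone
        _ ≤ (k:ℝ)^m * (1 - (m:ℝ)/k)^n :=
            mul_le_mul_of_nonneg_right hchoose (pow_nonneg hB0 n)
        _ ≤ (k:ℝ)^m * ((k:ℝ)⁻¹)^(2*m) := by
            apply mul_le_mul_of_nonneg_left ?_ (by positivity)
            calc (1 - (m:ℝ)/k)^n ≤ Real.exp (-((m:ℝ)/k)) ^ n := hexp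
              _ = Real.exp ((n:ℝ) * (-((m:ℝ)/k))) := hexp2
              _ ≤ Real.exp (-(2 * (m:ℝ) * Real.log k)) := hexp3
              _ = ((k:ℝ)⁻¹)^(2*m) := hexp4
    have hsimp : (k:ℝ)^m * ((k:ℝ)⁻¹)^(2*m) = ((k:ℝ)^m)⁻¹ := by
      rw [inv_pow, two_mul, pow_add]
      have hkm : (k:ℝ)^m ≠ 0 := by positivity
      field_simp
    rw [hsimp] at hone2
    have hk2 : (2:ℝ) ≤ (k:ℝ)^m :=
      le_trans hkR (le_self_pow₀ (by linarith) (by omega))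
    have := (one_le_inv_iff₀.1 hone2).2
    linarith


end

end PML
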